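/- Let Q be a quiver with vertex set Q_0 and arrow set Q_1, with symmetrised Euler form (d,e)_Q = 2·Σ_{i∈Q_0} d_i e_i − Σ_{a∈Q_1}(d_{s(a)} e_{t(a)} + d_{t(a)} e_{s(a)}) on ℕ^{Q_0}. If d belongs to the set of primitive positive roots Σ_{Π_Q} (i.e., d ≠ 0, 2−(d,d)_Q ≥ 0, and 2−(d,d)_Q > Σ_j(2−(d_j,d_j)_Q) for every nontrivial decomposition d = Σ d_j into nonzero d_j ∈ ℕ^{Q_0}), then the support of d (the set of vertices i with d_i ≠ 0) is connected as a subgraph of the underlying graph of Q. -/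
import Mathlib


/-- Primitive positive roots for `(M, B)`. -/
def IsPrimRoot {M : Type} [AddCommMonoid M] (B : M → M → ℤ) (m : M) : Prop :=
  m ≠ 0 ∧ 0 ≤ 2 - B m m ∧
    ∀ l : List M, 2 ≤ l.length → (∀ x ∈ l, x ≠ 0) → l.sum = m →
      (l.map fun x => 2 - B x x).sum < 2 - B m m

/-- The symmetrised Euler form of a quiver with vertex set `V`, arrow set `A`,
source `s` and target `t`, evaluated on dimension vectors in `ℕ^V`:
`(d,e)_Q = 2·Σ_i d_i e_i − Σ_a (d_{s a} e_{t a} + d_{t a} e_{s a})`. -/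
def symEuler {V A : Type} [Fintype V] [Fintype A] (s t : A → V) (d e : V → ℕ) : ℤ :=
  2 * ∑ i, (d i : ℤ) * (e i : ℤ)
    - ∑ a, ((d (s a) : ℤ) * (e (t a) : ℤ) + (d (t a) : ℤ) * (e (s a) : ℤ))

theorem stmt1 {V A : Type} [Fintype V] [Fintype A] (s t : A → V)
    (d : V → ℕ) (hd : IsPrimRoot (symEuler s t) d) :
    ∀ S T : Set V, S ∪ T = {i | d i ≠ 0} → Disjoint S T → S.Nonempty → T.Nonempty →
      ∃ a : A, (s a ∈ S ∧ t a ∈ T) ∨ (s a ∈ T ∧ t a ∈ S) := by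
  classical
  intro S T hST hdisj hS hT
  by_contra h
  push_neg at h
  obtain ⟨hne, hpos, hmin⟩ := hd
  set d1 : V → ℕ := fun i => if i ∈ S then d i else 0 with hd1
  set d2 : V → ℕ := fun i => if i ∈ T then d i else 0 with hd2
  have hSsupp : ∀ i ∈ S, d i ≠ 0 := by
    intro i hi
    have : i ∈ S ∪ T := Or.inl hi
    rw [hST] at this; exact this
  have hTsupp : ∀ i ∈ T, d i ≠ 0 := by
    intro i hi
    have : i ∈ S ∪ T := Or.inr hi
    rw [hST] at this; exact this
  have hsum : ∀ i, d1 i + d2 i = d i := by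
    intro i
    by_cases hiS : i ∈ S
    · have hiT : i ∉ T := fun hiT => (Set.disjoint_left.mp hdisj hiS) hiT
      simp [hd1, hd2, hiS, hiT]
    · by_cases hiT : i ∈ T
      · simp [hd1, hd2, hiS, hiT]
      · have : d i = 0 := by
          by_contra hdi
          have : i ∈ S ∪ T := by rw [hST]; exact hdi
          rcases this with h' | h' <;> [exact hiS h'; exact hiT h']
        simp [hd1, hd2, hiS, hiT, this]
  -- cross terms vanish
  have hcrossV : ∀ i, d1 i * d2 i = 0 := by
    intro i
    by_cases hiS : i ∈ S
    · have hiT : i ∉ T := fun hiT => (Set.disjoint_left.mp hdisj hiS) hiT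
      simp [hd1, hd2, hiT]
    · simp [hd1, hiS]
  have hcrossA : ∀ a, d1 (s a) * d2 (t a) = 0 ∧ d1 (t a) * d2 (s a) = 0 := by
    intro a
    constructor
    · by_cases h1 : s a ∈ S
      · by_cases h2 : t a ∈ T
        · exact absurd h2 ((h a).1 h1)
        · simp [hd2, h2]
      · simp [hd1, h1]
    · by_cases h1 : t a ∈ S
      · by_cases h2 : s a ∈ T
        · exact absurd h1 ((h a).2 h2)
        · simp [hd2, h2]
      · simp [hd1, h1]
  -- symEuler splits
  have hsplit : symEuler s t d d = symEuler s t d1 d1 + symEuler s t d2 d2 := by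
    unfold symEuler
    have hv : ∀ i, ((d i : ℤ)) * (d i : ℤ)
        = (d1 i : ℤ) * d1 i + (d2 i : ℤ) * d2 i := by
      intro i
      have h0 : (d1 i : ℤ) * d2 i = 0 := by exact_mod_cast congrArg (Nat.cast : ℕ → ℤ) (hcrossV i)
      have hdi : (d i : ℤ) = d1 i + d2 i := by exact_mod_cast (hsum i).symm
      rw [hdi]; ring_nf; nlinarith [h0]
    have ha : ∀ a, ((d (s a) : ℤ) * (d (t a) : ℤ) + (d (t a) : ℤ) * (d (s a) : ℤ))
        = ((d1 (s a) : ℤ) * d1 (t a) + (d1 (t a) : ℤ) * d1 (s a))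
          + ((d2 (s a) : ℤ) * d2 (t a) + (d2 (t a) : ℤ) * d2 (s a)) := by
      intro a
      obtain ⟨c1, c2⟩ := hcrossA a
      have c1' : (d1 (s a) : ℤ) * d2 (t a) = 0 := by exact_mod_cast congrArg (Nat.cast : ℕ → ℤ) c1
      have c2' : (d1 (t a) : ℤ) * d2 (s a) = 0 := by exact_mod_cast congrArg (Nat.cast : ℕ → ℤ) c2
      have e1 : (d (s a) : ℤ) = d1 (s a) + d2 (s a) := by exact_mod_cast (hsum (s a)).symm
      have e2 : (d (t a) : ℤ) = d1 (t a) + d2 (t a) := by exact_mod_cast (hsum (t a)).symm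
      rw [e1, e2]; nlinarith [c1', c2']
    rw [show (∑ i, (d i : ℤ) * (d i : ℤ)) = ∑ i, ((d1 i : ℤ) * d1 i + (d2 i : ℤ) * d2 i)
        from Finset.sum_congr rfl fun i _ => hv i]
    rw [show (∑ a, ((d (s a) : ℤ) * (d (t a) : ℤ) + (d (t a) : ℤ) * (d (s a) : ℤ)))
        = ∑ a, (((d1 (s a) : ℤ) * d1 (t a) + (d1 (t a) : ℤ) * d1 (s a))
          + ((d2 (s a) : ℤ) * d2 (t a) + (d2 (t a) : ℤ) * d2 (s a)))
        from Finset.sum_congr rfl fun a _ => ha a]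
    rw [Finset.sum_add_distrib, Finset.sum_add_distrib]
    ring
  -- d1, d2 nonzero
  obtain ⟨i0, hi0⟩ := hS
  obtain ⟨j0, hj0⟩ := hT
  have hd1ne : d1 ≠ 0 := by
    intro hz
    have : d1 i0 = 0 := congrFun hz i0
    rw [hd1] at this; simp [hi0] at this
    exact hSsupp i0 hi0 this
  have hd2ne : d2 ≠ 0 := by
    intro hz
    have : d2 j0 = 0 := congrFun hz j0
    rw [hd2] at this; simp [hj0] at this
    exact hTsupp j0 hj0 this
  have hlsum : ([d1, d2] : List (V → ℕ)).sum = d := by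
    funext i
    simp [hsum i]
  have := hmin [d1, d2] (by simp) (by
    intro x hx
    simp at hx
    rcases hx with rfl | rfl
    exacts [hd1ne, hd2ne]) hlsum
  simp at this
  rw [hsplit] at this
  linarith
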